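/- Order preserving: In the one-dimensional path model (d = 1), if the profile at time t equals G, i.e. |x_i(t) − x_{i+1}(t)| ≤ ε for every i ≥ 1, and the sequence (x_i(t))_{i ≥ 1} is nondecreasing in i, then the profile at time t+1 also equals G and the sequence (x_i(t+1))_{i ≥ 1} is nondecreasing in i. -/

import Mathlib

/-- The update neighborhood of vertex `i ≥ 1` at time `t` in the one-dimensional
mixed HK model under group interaction on the path graph on `ℤ⁺` with edges `(i, i+1)`:
`N_i(t) = {j ∈ ℤ⁺ : j = i, or |i − j| = 1 and |x_i(t) − x_j(t)| ≤ ε}`. -/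
noncomputable def pathNbhd1 (ε : ℝ) (x : ℕ → ℕ → ℝ) (t i : ℕ) : Finset ℕ :=
  (Finset.range (i + 2)).filter fun j =>
    1 ≤ j ∧ (j = i ∨ ((j = i + 1 ∨ j + 1 = i) ∧ |x t i - x t j| ≤ ε))

lemma pathNbhd1_one (ε : ℝ) (x : ℕ → ℕ → ℝ) (t : ℕ)
    (h : |x t 1 - x t 2| ≤ ε) : pathNbhd1 ε x t 1 = {1, 2} := by
  ext j
  simp only [pathNbhd1, Finset.mem_filter, Finset.mem_range, Finset.mem_insert,
    Finset.mem_singleton]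
  constructor
  · rintro ⟨hj, hj1, h1 | ⟨h2 | h2, _⟩⟩ <;> omega
  · rintro (rfl | rfl)
    · exact ⟨by omega, by omega, Or.inl rfl⟩
    · exact ⟨by omega, by omega, Or.inr ⟨Or.inl rfl, h⟩⟩

lemma pathNbhd1_succ (ε : ℝ) (x : ℕ → ℕ → ℝ) (t k : ℕ)
    (h1 : |x t (k + 2) - x t (k + 1)| ≤ ε)
    (h2 : |x t (k + 2) - x t (k + 3)| ≤ ε) :
    pathNbhd1 ε x t (k + 2) = {k + 1, k + 2, k + 3} := by
  ext j
  simp only [pathNbhd1, Finset.mem_filter, Finset.mem_range, Finset.mem_insert,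
    Finset.mem_singleton]
  constructor
  · rintro ⟨hj, hj1, h | ⟨h | h, _⟩⟩ <;> omega
  · rintro (rfl | rfl | rfl)
    · exact ⟨by omega, by omega, Or.inr ⟨Or.inr rfl, h1⟩⟩
    · exact ⟨by omega, by omega, Or.inl rfl⟩
    · exact ⟨by omega, by omega, Or.inr ⟨Or.inl rfl, h2⟩⟩

lemma le_combo (a b p q r s : ℝ) (ha0 : 0 ≤ a) (ha1 : a ≤ 1) (hb0 : 0 ≤ b) (hb1 : b ≤ 1)
    (h1 : p ≤ r) (h2 : p ≤ s) (h3 : q ≤ r) (h4 : q ≤ s) :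
    a * p + (1 - a) * q ≤ b * r + (1 - b) * s := by
  have hL1 : a * p + (1 - a) * q ≤ r := by nlinarith
  have hL2 : a * p + (1 - a) * q ≤ s := by nlinarith
  nlinarith [mul_nonneg hb0 (sub_nonneg.2 hL1), mul_nonneg (sub_nonneg.2 hb1) (sub_nonneg.2 hL2)]

lemma combo_sub_le (ε a b p q r s : ℝ) (ha0 : 0 ≤ a) (ha1 : a ≤ 1) (hb0 : 0 ≤ b) (hb1 : b ≤ 1)
    (h1 : r ≤ p + ε) (h2 : r ≤ q + ε) (h3 : s ≤ p + ε) (h4 : s ≤ q + ε) :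
    b * r + (1 - b) * s ≤ a * p + (1 - a) * q + ε := by
  have hL1 : r ≤ a * p + (1 - a) * q + ε := by nlinarith
  have hL2 : s ≤ a * p + (1 - a) * q + ε := by nlinarith
  nlinarith [mul_nonneg hb0 (sub_nonneg.2 hL1), mul_nonneg (sub_nonneg.2 hb1) (sub_nonneg.2 hL2)]

/-- **Order preserving.** In the one-dimensional path model under group interaction,
if the profile at time `t` equals `G` and `(x_i(t))_{i ≥ 1}` is nondecreasing in `i`,
then the profile at time `t+1` equals `G` and `(x_i(t+1))_{i ≥ 1}` is nondecreasing. -/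
theorem order_preserving (ε : ℝ) (hε : 0 < ε)
    (x : ℕ → ℕ → ℝ) (α : ℕ → ℕ → ℝ)
    (hα : ∀ t i, α t i ∈ Set.Icc (0 : ℝ) 1)
    (hdyn : ∀ t i, 1 ≤ i → x (t + 1) i =
      α t i * x t i + ((1 - α t i) / ((pathNbhd1 ε x t i).card : ℝ)) *
        ∑ k ∈ pathNbhd1 ε x t i, x t k)
    (t : ℕ) (hprof : ∀ i, 1 ≤ i → |x t i - x t (i + 1)| ≤ ε)
    (hmono : ∀ i, 1 ≤ i → x t i ≤ x t (i + 1)) :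
    (∀ i, 1 ≤ i → |x (t + 1) i - x (t + 1) (i + 1)| ≤ ε) ∧
    (∀ i, 1 ≤ i → x (t + 1) i ≤ x (t + 1) (i + 1)) := by
  -- one-sided consequences of the profile hypothesis
  have hub : ∀ i, 1 ≤ i → x t (i + 1) ≤ x t i + ε := by
    intro i hi
    have := (abs_sub_le_iff.mp (hprof i hi)).2
    linarith
  -- the neighborhood mean
  set m : ℕ → ℝ := fun i =>
    if i = 1 then (x t 1 + x t 2) / 2 else (x t (i - 1) + x t i + x t (i + 1)) / 3 with hm
  -- closed form of the dynamics
  have hform : ∀ i, 1 ≤ i → x (t + 1) i = α t i * x t i + (1 - α t i) * m i := by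
    intro i hi
    match i, hi with
    | 1, _ =>
      rw [hdyn t 1 le_rfl, pathNbhd1_one ε x t (hprof 1 le_rfl)]
      have h12 : (1 : ℕ) ≠ 2 := by omega
      rw [Finset.sum_insert (by simp), Finset.card_insert_of_notMem (by simp),
        Finset.sum_singleton, Finset.card_singleton]
      simp only [hm, if_pos rfl]
      push_cast
      ring
    | (k + 2), _ =>
      have hprev : |x t (k + 2) - x t (k + 1)| ≤ ε := by
        rw [abs_sub_comm]; exact hprof (k + 1) (by omega)
      rw [hdyn t (k + 2) (by omega),
        pathNbhd1_succ ε x t k hprev (hprof (k + 2) (by omega))]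
      rw [Finset.sum_insert (by simp), Finset.card_insert_of_notMem (by simp),
        Finset.sum_insert (by simp), Finset.card_insert_of_notMem (by simp),
        Finset.sum_singleton, Finset.card_singleton]
      simp only [hm, if_neg (by omega : ¬ k + 2 = 1)]
      have : k + 2 - 1 = k + 1 := by omega
      rw [this]
      push_cast
      ring
  -- the key numerical bounds between consecutive values and means
  have hbounds : ∀ i, 1 ≤ i →
      (x t i ≤ m (i + 1)) ∧ (m i ≤ x t (i + 1)) ∧ (m i ≤ m (i + 1)) ∧
      (x t (i + 1) ≤ m i + ε) ∧ (m (i + 1) ≤ x t i + ε) ∧ (m (i + 1) ≤ m i + ε) := by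
    intro i hi
    match i, hi with
    | 1, _ =>
      have e1 : m 1 = (x t 1 + x t 2) / 2 := by simp [hm]
      have e2 : m 2 = (x t 1 + x t 2 + x t 3) / 3 := by norm_num [hm]
      have a1 := hmono 1 le_rfl
      have a2 := hmono 2 (by omega)
      have b1 := hub 1 le_rfl
      have b2 := hub 2 (by omega)
      rw [e1, e2]
      norm_num
      refine ⟨by linarith, by linarith, by linarith, by linarith, by linarith, by linarith⟩
    | (k + 2), _ =>
      have e1 : m (k + 2) = (x t (k + 1) + x t (k + 2) + x t (k + 3)) / 3 := by
        simp only [hm, if_neg (by omega : ¬ k + 2 = 1)]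
        have : k + 2 - 1 = k + 1 := by omega
        rw [this]
      have e2 : m (k + 3) = (x t (k + 2) + x t (k + 3) + x t (k + 4)) / 3 := by
        simp only [hm, if_neg (by omega : ¬ k + 3 = 1)]
        have : k + 3 - 1 = k + 2 := by omega
        rw [this]
      have a1 := hmono (k + 1) (by omega)
      have a2 := hmono (k + 2) (by omega)
      have a3 := hmono (k + 3) (by omega)
      have b1 := hub (k + 1) (by omega)
      have b2 := hub (k + 2) (by omega)
      have b3 := hub (k + 3) (by omega)
      have h23 : k + 2 + 1 = k + 3 := by omega
      rw [h23, e1, e2]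
      have h12 : k + 1 + 1 = k + 2 := by omega
      have h34 : k + 3 + 1 = k + 4 := by omega
      rw [h12] at a1 b1
      rw [h23] at a2 b2
      rw [h34] at a3 b3
      refine ⟨by linarith, by linarith, by linarith, by linarith, by linarith, by linarith⟩
  -- put everything together
  have hmono' : ∀ i, 1 ≤ i → x (t + 1) i ≤ x (t + 1) (i + 1) := by
    intro i hi
    obtain ⟨c1, c2, c3, _, _, _⟩ := hbounds i hi
    rw [hform i hi, hform (i + 1) (by omega)]
    obtain ⟨ha0, ha1⟩ := hα t i
    obtain ⟨hb0, hb1⟩ := hα t (i + 1)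
    exact le_combo _ _ _ _ _ _ ha0 ha1 hb0 hb1 (hmono i hi) c1 c2 c3
  refine ⟨?_, hmono'⟩
  intro i hi
  rw [abs_sub_comm, abs_of_nonneg (sub_nonneg.2 (hmono' i hi)), sub_le_iff_le_add]
  obtain ⟨_, _, _, c4, c5, c6⟩ := hbounds i hi
  rw [hform i hi, hform (i + 1) (by omega)]
  obtain ⟨ha0, ha1⟩ := hα t i
  obtain ⟨hb0, hb1⟩ := hα t (i + 1)
  have c0 : x t (i + 1) ≤ x t i + ε := hub i hi
  have := combo_sub_le ε (α t i) (α t (i + 1)) (x t i) (m i) (x t (i + 1)) (m (i + 1))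
    ha0 ha1 hb0 hb1 c0 c4 c5 c6
  linarith
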